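/- Let f : ℝ^d → ℝ be L-smooth (L > 0) and bounded below by f* ∈ ℝ, let x⁰ ∈ ℝ^d, and set Δ = f(x⁰) − f*. Let σ² > 0 and ε > 0. Let G be a stochastic gradient oracle for f with variance σ² on a probability space (Ω, P), and let ξ⁰, ξ¹, ξ², … be an i.i.d. sequence of Ω-valued random elements. Define the stochastic gradient descent iterates x^{k+1} = x^k − γ·G(x^k, ξ^k) with stepsize γ = min{1/L, ε/(2Lσ²)}. Then for every natural number K ≥ 4ΔL/ε + 8ΔLσ²/ε², we have (1/K)·∑_{k=0}^{K−1} E[‖∇f(x^k)‖²] ≤ ε. -/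

import Mathlib

open MeasureTheory ProbabilityTheory Finset

local notation "⟪" x ", " y "⟫" => @inner ℝ _ _ x y

theorem taylor_bd {E : Type*} [NormedAddCommGroup E] [InnerProductSpace ℝ E] [CompleteSpace E]
    (f : E → ℝ) (L : ℝ) (hL : 0 ≤ L) (hdiff : Differentiable ℝ f)
    (hsmooth : ∀ x y, ‖gradient f x - gradient f y‖ ≤ L * ‖x - y‖) (x y : E) :
    |f y - f x - ⟪gradient f x, y - x⟫| ≤ L / 2 * ‖y - x‖ ^ 2 := by
  set v := y - x with hv
  have hgc : Continuous (gradient f) := by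
    have : LipschitzWith (Real.toNNReal L) (gradient f) := by
      apply LipschitzWith.of_dist_le_mul
      intro a b
      simpa [dist_eq_norm, Real.coe_toNNReal L hL] using hsmooth a b
    exact this.continuous
  have hφ : ∀ t : ℝ, HasDerivAt (fun t : ℝ => f (x + t • v))
      ⟪gradient f (x + t • v), v⟫ t := by
    intro t
    have hf1 : HasFDerivAt f ((InnerProductSpace.toDual ℝ E) (gradient f (x + t • v)))
        (x + t • v) := hasGradientAt_iff_hasFDerivAt.1 (hdiff _).hasGradientAt
    have hf2 : HasDerivAt (fun t : ℝ => x + t • v) v t := by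
      simpa using ((hasDerivAt_id t).smul_const v).const_add x
    exact (hf1.comp_hasDerivAt t hf2)
  have hcont : Continuous fun t : ℝ => ⟪gradient f (x + t • v), v⟫ :=
    (hgc.comp (by continuity)).inner continuous_const
  have hint : ∀ a b : ℝ, IntervalIntegrable (fun t : ℝ => ⟪gradient f (x + t • v), v⟫)
      MeasureTheory.volume a b := fun a b => hcont.intervalIntegrable a b
  have key : f y - f x = ∫ t in (0:ℝ)..1, ⟪gradient f (x + t • v), v⟫ := by
    have := intervalIntegral.integral_eq_sub_of_hasDerivAt
      (f := fun t : ℝ => f (x + t • v)) (fun t _ => hφ t) (hint 0 1)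
    rw [this]; congr 1 <;> simp [hv]
  have key2 : f y - f x - ⟪gradient f x, v⟫
      = ∫ t in (0:ℝ)..1, (⟪gradient f (x + t • v), v⟫ - ⟪gradient f x, v⟫) := by
    rw [intervalIntegral.integral_sub (hint 0 1) (intervalIntegrable_const (c := ⟪gradient f x, v⟫)),
      intervalIntegral.integral_const]
    simp [key]
  have hbd : ∀ t ∈ Set.Icc (0:ℝ) 1,
      |⟪gradient f (x + t • v), v⟫ - ⟪gradient f x, v⟫| ≤ L * t * ‖v‖ ^ 2 := by
    intro t ht
    have heq : ⟪gradient f (x + t • v), v⟫ - ⟪gradient f x, v⟫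
        = ⟪gradient f (x + t • v) - gradient f x, v⟫ := by
      rw [inner_sub_left]
    rw [heq]
    calc |⟪gradient f (x + t • v) - gradient f x, v⟫|
        ≤ ‖gradient f (x + t • v) - gradient f x‖ * ‖v‖ := abs_real_inner_le_norm _ _
      _ ≤ (L * ‖(x + t • v) - x‖) * ‖v‖ := by
          gcongr; exact hsmooth _ _
      _ = L * t * ‖v‖ ^ 2 := by
          rw [add_sub_cancel_left, norm_smul]
          simp only [Real.norm_eq_abs, abs_of_nonneg ht.1]; ring
  rw [key2]
  have h1 : |∫ t in (0:ℝ)..1, (⟪gradient f (x + t • v), v⟫ - ⟪gradient f x, v⟫)|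
      ≤ ∫ t in (0:ℝ)..1, L * t * ‖v‖ ^ 2 := by
    have := intervalIntegral.norm_integral_le_integral_norm
      (f := fun t : ℝ => ⟪gradient f (x + t • v), v⟫ - ⟪gradient f x, v⟫)
      (μ := MeasureTheory.volume) (zero_le_one)
    refine this.trans ?_
    apply intervalIntegral.integral_mono_on zero_le_one
    · exact ((hcont.sub continuous_const).norm).intervalIntegrable 0 1
    · exact Continuous.intervalIntegrable (by continuity) 0 1
    · intro t ht
      simpa [Real.norm_eq_abs] using hbd t ht
  have h2 : ∫ t in (0:ℝ)..1, L * t * ‖v‖ ^ 2 = L / 2 * ‖v‖ ^ 2 := by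
    have hfe : (fun t : ℝ => L * t * ‖v‖ ^ 2) = fun t : ℝ => (L * ‖v‖ ^ 2) * t := by
      funext t; ring
    rw [hfe, intervalIntegral.integral_const_mul, integral_id]
    ring
  calc |∫ t in (0:ℝ)..1, (⟪gradient f (x + t • v), v⟫ - ⟪gradient f x, v⟫)|
      ≤ ∫ t in (0:ℝ)..1, L * t * ‖v‖ ^ 2 := h1
    _ = L / 2 * ‖v‖ ^ 2 := h2

theorem onestep {E : Type*} [NormedAddCommGroup E] [InnerProductSpace ℝ E] [CompleteSpace E]
    [MeasurableSpace E] [BorelSpace E]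
    (f : E → ℝ) (L : ℝ) (hL : 0 < L) (hdiff : Differentiable ℝ f)
    (hsmooth : ∀ x y, ‖gradient f x - gradient f y‖ ≤ L * ‖x - y‖)
    (σ2 : ℝ)
    {Ω : Type*} [MeasurableSpace Ω] (P : MeasureTheory.Measure Ω) [IsProbabilityMeasure P]
    (G : E → Ω → E)
    (hGmeas : Measurable (fun q : E × Ω => G q.1 q.2))
    (hGint : ∀ x, Integrable (G x) P)
    (hGsqint : ∀ x, Integrable (fun ω => ‖G x ω - gradient f x‖^2) P)
    (hGunbiased : ∀ x, ∫ ω, G x ω ∂P = gradient f x)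
    (hGvar : ∀ x, ∫ ω, ‖G x ω - gradient f x‖^2 ∂P ≤ σ2)
    (γ : ℝ) (hγ0 : 0 ≤ γ) (hγL : γ * L ≤ 1) (v : E) :
    Integrable (fun ω => f (v - γ • G v ω)) P ∧
    Integrable (fun ω => ‖G v ω‖^2) P ∧
    (∫ ω, ‖G v ω‖^2 ∂P ≤ σ2 + ‖gradient f v‖^2) ∧
    ∫ ω, f (v - γ • G v ω) ∂P ≤ f v - γ/2 * ‖gradient f v‖^2 + L * γ^2 / 2 * σ2 := by
  set gv := gradient f v with hgv
  have hGm : Measurable (G v) := hGmeas.comp measurable_prodMk_left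
  have hint2 : Integrable (fun ω => ⟪gv, G v ω⟫) P := (hGint v).const_inner gv
  have hnormsq : ∀ ω, ‖G v ω‖^2 = ‖G v ω - gv‖^2 + 2 * ⟪gv, G v ω⟫ - ‖gv‖^2 := by
    intro ω
    have h1 : ‖G v ω - gv‖^2 = ‖G v ω‖^2 - 2 * ⟪G v ω, gv⟫ + ‖gv‖^2 :=
      norm_sub_sq_real _ _
    have h2 : ⟪G v ω, gv⟫ = ⟪gv, G v ω⟫ := real_inner_comm _ _
    linarith
  have hsum : Integrable (fun ω => ‖G v ω - gv‖^2 + 2 * ⟪gv, G v ω⟫) P := by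
    exact (hGsqint v).add (hint2.const_mul 2)
  have hsum2 : Integrable (fun ω => ‖G v ω - gv‖^2 + 2 * ⟪gv, G v ω⟫ - ‖gv‖^2) P := by
    exact hsum.sub (integrable_const _)
  have hGsq : Integrable (fun ω => ‖G v ω‖^2) P :=
    hsum2.congr (Filter.Eventually.of_forall fun ω => (hnormsq ω).symm)
  have hGsqval : ∫ ω, ‖G v ω‖^2 ∂P ≤ σ2 + ‖gv‖^2 := by
    calc ∫ ω, ‖G v ω‖^2 ∂P
        = ∫ ω, (‖G v ω - gv‖^2 + 2 * ⟪gv, G v ω⟫ - ‖gv‖^2) ∂P :=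
          integral_congr_ae (Filter.Eventually.of_forall fun ω => hnormsq ω)
      _ = ∫ ω, ‖G v ω - gv‖^2 ∂P + 2 * ∫ ω, ⟪gv, G v ω⟫ ∂P - ‖gv‖^2 := by
          rw [integral_sub hsum (integrable_const _),
            integral_add (hGsqint v) (hint2.const_mul 2), integral_const_mul,
            integral_const]
          simp [hgv]
      _ = ∫ ω, ‖G v ω - gv‖^2 ∂P + 2 * ⟪gv, gv⟫ - ‖gv‖^2 := by
          rw [integral_inner (hGint v), hGunbiased v]
      _ ≤ σ2 + ‖gv‖^2 := by
          have h3 : ⟪gv, gv⟫ = ‖gv‖^2 := real_inner_self_eq_norm_sq gv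
          rw [h3]; linarith [hGvar v]
  have hdesc : ∀ ω, f (v - γ • G v ω) ≤ f v - γ * ⟪gv, G v ω⟫ + L * γ^2 / 2 * ‖G v ω‖^2 := by
    intro ω
    have := taylor_bd f L hL.le hdiff hsmooth v (v - γ • G v ω)
    have he1 : (v - γ • G v ω) - v = -(γ • G v ω) := by abel
    rw [he1] at this
    have he2 : ⟪gv, -(γ • G v ω)⟫ = -(γ * ⟪gv, G v ω⟫) := by
      rw [inner_neg_right, real_inner_smul_right]
    have he3 : ‖-(γ • G v ω)‖^2 = γ^2 * ‖G v ω‖^2 := by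
      rw [norm_neg, norm_smul]
      simp [abs_of_nonneg hγ0, mul_pow]
    rw [he2, he3] at this
    have := (abs_le.1 this).2
    nlinarith [this]
  have habs : ∀ ω, |f (v - γ • G v ω)| ≤ |f v| + γ * ‖gv‖ * ‖G v ω‖ + L * γ^2 / 2 * ‖G v ω‖^2 := by
    intro ω
    have h := taylor_bd f L hL.le hdiff hsmooth v (v - γ • G v ω)
    have he1 : (v - γ • G v ω) - v = -(γ • G v ω) := by abel
    rw [he1] at h
    have h2 : |⟪gv, -(γ • G v ω)⟫| ≤ γ * ‖gv‖ * ‖G v ω‖ := by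
      rw [inner_neg_right, abs_neg]
      calc |⟪gv, γ • G v ω⟫| ≤ ‖gv‖ * ‖γ • G v ω‖ := abs_real_inner_le_norm _ _
        _ = γ * ‖gv‖ * ‖G v ω‖ := by rw [norm_smul]; simp [abs_of_nonneg hγ0]; ring
    have h3 : ‖-(γ • G v ω)‖^2 = γ^2 * ‖G v ω‖^2 := by
      rw [norm_neg, norm_smul]; simp [abs_of_nonneg hγ0, mul_pow]
    rw [h3] at h
    have h4 := abs_sub_abs_le_abs_sub (f (v - γ • G v ω)) (f v + ⟪gv, -(γ • G v ω)⟫)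
    have h5 : |f v + ⟪gv, -(γ • G v ω)⟫| ≤ |f v| + |⟪gv, -(γ • G v ω)⟫| := abs_add_le _ _
    have h6 : f (v - γ • G v ω) - (f v + ⟪gv, -(γ • G v ω)⟫)
        = f (v - γ • G v ω) - f v - ⟪gv, -(γ • G v ω)⟫ := by ring
    rw [h6] at h4
    nlinarith [abs_nonneg (f (v - γ • G v ω))]
  have hm2 : Measurable fun ω => v - γ • G v ω :=
    ((continuous_const.sub (continuous_id.const_smul γ)).measurable).comp hGm
  have hfmeas : AEStronglyMeasurable (fun ω => f (v - γ • G v ω)) P :=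
    (hdiff.continuous.measurable.comp hm2).aestronglyMeasurable
  have hfint : Integrable (fun ω => f (v - γ • G v ω)) P := by
    have hbint : Integrable (fun ω => |f v| + γ * ‖gv‖ * ‖G v ω‖ + L * γ^2 / 2 * ‖G v ω‖^2) P := by
      exact ((integrable_const _).add (((hGint v).norm.const_mul (γ * ‖gv‖)))).add
        (hGsq.const_mul (L * γ^2 / 2))
    refine Integrable.mono' hbint hfmeas (Filter.Eventually.of_forall fun ω => ?_)
    simpa [Real.norm_eq_abs] using habs ω
  refine ⟨hfint, hGsq, hGsqval, ?_⟩
  have hA : Integrable (fun ω => f v - γ * ⟪gv, G v ω⟫) P := by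
    exact (integrable_const _).sub (hint2.const_mul γ)
  have hB : Integrable (fun ω => L * γ^2 / 2 * ‖G v ω‖^2) P := hGsq.const_mul _
  have hRHSint : Integrable
      (fun ω => f v - γ * ⟪gv, G v ω⟫ + L * γ^2 / 2 * ‖G v ω‖^2) P := by
    exact hA.add hB
  have hmono : ∫ ω, f (v - γ • G v ω) ∂P
      ≤ ∫ ω, (f v - γ * ⟪gv, G v ω⟫ + L * γ^2 / 2 * ‖G v ω‖^2) ∂P :=
    integral_mono hfint hRHSint hdesc
  have hRHSval : ∫ ω, (f v - γ * ⟪gv, G v ω⟫ + L * γ^2 / 2 * ‖G v ω‖^2) ∂P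
      = f v - γ * ‖gv‖^2 + L * γ^2 / 2 * ∫ ω, ‖G v ω‖^2 ∂P := by
    rw [integral_add hA hB, integral_sub (integrable_const _) (hint2.const_mul γ),
      integral_const, integral_const_mul, integral_const_mul, integral_inner (hGint v),
      hGunbiased v, real_inner_self_eq_norm_sq]
    simp [hgv]
  rw [hRHSval] at hmono
  refine hmono.trans ?_
  have hS := hGsqval
  have hc : (0:ℝ) ≤ L * γ^2 / 2 := by positivity
  have h1 : L * γ^2 / 2 * ∫ ω, ‖G v ω‖^2 ∂P ≤ L * γ^2 / 2 * (σ2 + ‖gv‖^2) :=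
    mul_le_mul_of_nonneg_left hS hc
  have h3 : γ * (γ * L) ≤ γ * 1 := mul_le_mul_of_nonneg_left hγL hγ0
  have h2 : L * γ^2 / 2 * ‖gv‖^2 ≤ γ / 2 * ‖gv‖^2 := by
    nlinarith [mul_le_mul_of_nonneg_right h3 (sq_nonneg ‖gv‖)]
  linarith

noncomputable def sgdIter {E : Type*} {Ω : Type*} [NormedAddCommGroup E] [NormedSpace ℝ E]
    (x₀ : E) (γ : ℝ) (G : E → Ω → E) : ℕ → (ℕ → Ω) → E
  | 0, _ => x₀
  | (k+1), s => sgdIter x₀ γ G k s - γ • G (sgdIter x₀ γ G k s) (s k)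

lemma sgdIter_congr {E : Type*} {Ω : Type*} [NormedAddCommGroup E] [NormedSpace ℝ E]
    (x₀ : E) (γ : ℝ) (G : E → Ω → E) (k : ℕ) (s s' : ℕ → Ω) (h : ∀ i < k, s i = s' i) :
    sgdIter x₀ γ G k s = sgdIter x₀ γ G k s' := by
  induction k with
  | zero => rfl
  | succ k ih =>
    have h1 := ih (fun i hi => h i (Nat.lt_succ_of_lt hi))
    simp only [sgdIter, h1, h k (Nat.lt_succ_self k)]

lemma sgdIter_measurable {E : Type*} {Ω : Type*} [NormedAddCommGroup E] [NormedSpace ℝ E]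
    [MeasurableSpace E] [BorelSpace E] [SecondCountableTopology E] [MeasurableSpace Ω]
    (x₀ : E) (γ : ℝ) (G : E → Ω → E)
    (hG : Measurable fun q : E × Ω => G q.1 q.2) (k : ℕ) :
    Measurable (sgdIter x₀ γ G k) := by
  induction k with
  | zero => exact measurable_const
  | succ k ih =>
    have h1 : Measurable fun s : ℕ → Ω => G (sgdIter x₀ γ G k s) (s k) :=
      hG.comp (ih.prodMk (measurable_pi_apply k))
    exact ih.sub (h1.const_smul γ)

set_option maxHeartbeats 1000000 in
theorem stmt7 {d : ℕ} (f : EuclideanSpace ℝ (Fin d) → ℝ)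
    (L : ℝ) (hL : 0 < L)
    (hdiff : Differentiable ℝ f)
    (hsmooth : ∀ x y, ‖gradient f x - gradient f y‖ ≤ L * ‖x - y‖)
    (fstar : ℝ) (hlb : ∀ x, fstar ≤ f x)
    (x₀ : EuclideanSpace ℝ (Fin d)) (Δ : ℝ) (hΔ : Δ = f x₀ - fstar)
    (σ2 ε : ℝ) (hσ2 : 0 < σ2) (hε : 0 < ε)
    {Ω : Type*} [MeasurableSpace Ω] (P : Measure Ω) [IsProbabilityMeasure P]
    (G : EuclideanSpace ℝ (Fin d) → Ω → EuclideanSpace ℝ (Fin d))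
    (hGmeas : Measurable (fun q : EuclideanSpace ℝ (Fin d) × Ω => G q.1 q.2))
    (hGint : ∀ x, Integrable (G x) P)
    (hGsqint : ∀ x, Integrable (fun ω => ‖G x ω - gradient f x‖^2) P)
    (hGunbiased : ∀ x, ∫ ω, G x ω ∂P = gradient f x)
    (hGvar : ∀ x, ∫ ω, ‖G x ω - gradient f x‖^2 ∂P ≤ σ2)
    {Ω' : Type*} [MeasurableSpace Ω'] (Q : Measure Ω') [IsProbabilityMeasure Q]
    (ξ : ℕ → Ω' → Ω) (hξmeas : ∀ k, Measurable (ξ k))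
    (hindep : iIndepFun ξ Q)
    (hdist : ∀ k, Measure.map (ξ k) Q = P)
    (γ : ℝ) (hγ : γ = min (1 / L) (ε / (2 * L * σ2)))
    (x : ℕ → Ω' → EuclideanSpace ℝ (Fin d))
    (hx0 : ∀ ω, x 0 ω = x₀)
    (hxrec : ∀ k ω, x (k + 1) ω = x k ω - γ • G (x k ω) (ξ k ω)) :
    ∀ K : ℕ, 4 * Δ * L / ε + 8 * Δ * L * σ2 / ε^2 ≤ K →
      (1 / (K : ℝ)) * ∑ k ∈ Finset.range K, ∫ ω, ‖gradient f (x k ω)‖^2 ∂Q ≤ ε := by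
  -- basic positivity facts
  have hΔ0 : 0 ≤ Δ := by rw [hΔ]; linarith [hlb x₀]
  have hγpos : 0 < γ := by
    rw [hγ]; apply lt_min <;> positivity
  have hγ0 : 0 ≤ γ := hγpos.le
  have hγL : γ * L ≤ 1 := by
    have h : γ ≤ 1 / L := by rw [hγ]; exact min_le_left _ _
    have := mul_le_mul_of_nonneg_right h hL.le
    rwa [one_div, inv_mul_cancel₀ hL.ne'] at this
  have hγε : L * γ * σ2 ≤ ε / 2 := by
    have h : γ ≤ ε / (2 * L * σ2) := by rw [hγ]; exact min_le_right _ _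
    have h2 : γ * (2 * L * σ2) ≤ ε := by
      rw [← le_div_iff₀ (by positivity)]; exact h
    nlinarith
  have hγlb : ε / (L * (ε + 2 * σ2)) ≤ γ := by
    rw [hγ]
    apply le_min
    · rw [div_le_div_iff₀ (by positivity) hL]; nlinarith
    · rw [div_le_div_iff₀ (by positivity) (by positivity)]
      nlinarith [mul_nonneg (mul_nonneg hε.le hL.le) hε.le]
  -- continuity and measurability of the gradient
  have hgc : Continuous (gradient f) := by
    have : LipschitzWith (Real.toNNReal L) (gradient f) := by
      apply LipschitzWith.of_dist_le_mul
      intro a b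
      simpa [dist_eq_norm, Real.coe_toNNReal L hL.le] using hsmooth a b
    exact this.continuous
  -- growth bounds
  set A : ℝ := |f x₀| + ‖gradient f x₀‖ * (1 + ‖x₀‖) + L * ‖x₀‖^2 with hA
  set B : ℝ := ‖gradient f x₀‖ + L with hB
  have hB0 : 0 ≤ B := by positivity
  have hgrow : ∀ y, |f y| ≤ A + B * ‖y‖^2 := by
    intro y
    have h := taylor_bd f L hL.le hdiff hsmooth x₀ y
    have h3 : |⟪gradient f x₀, y - x₀⟫| ≤ ‖gradient f x₀‖ * ‖y - x₀‖ :=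
      abs_real_inner_le_norm _ _
    have h4 : ‖y - x₀‖ ≤ ‖y‖ + ‖x₀‖ := norm_sub_le _ _
    have t1 : |f y| ≤ |f x₀| + ‖gradient f x₀‖ * ‖y - x₀‖ + L/2 * ‖y - x₀‖^2 := by
      have e1 : f y = (f y - f x₀ - ⟪gradient f x₀, y - x₀⟫) + (f x₀ + ⟪gradient f x₀, y - x₀⟫) := by
        ring
      rw [e1]
      refine (abs_add_le _ _).trans ?_
      have e2 := abs_add_le (f x₀) ⟪gradient f x₀, y - x₀⟫
      linarith
    have t2 : ‖y - x₀‖^2 ≤ 2*‖y‖^2 + 2*‖x₀‖^2 := by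
      nlinarith [sq_nonneg (‖y‖ - ‖x₀‖), norm_nonneg (y - x₀), norm_nonneg y, norm_nonneg x₀]
    have t3 : ‖y - x₀‖ ≤ 1 + ‖y‖^2 + ‖x₀‖ := by
      nlinarith [sq_nonneg (‖y‖ - 1)]
    have u1 := mul_le_mul_of_nonneg_left t3 (norm_nonneg (gradient f x₀))
    have u2 := mul_le_mul_of_nonneg_left t2 (by positivity : (0:ℝ) ≤ L/2)
    rw [hA, hB]
    nlinarith [u1, u2, t1]
  set A' : ℝ := 2 * (‖gradient f x₀‖ + L * ‖x₀‖)^2 with hA'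
  set B' : ℝ := 2 * L^2 with hB'
  have hA'0 : 0 ≤ A' := by positivity
  have hB'0 : 0 ≤ B' := by positivity
  have hgbd : ∀ y, ‖gradient f y‖^2 ≤ A' + B' * ‖y‖^2 := by
    intro y
    have h1 : ‖gradient f y‖ ≤ ‖gradient f x₀‖ + L * ‖y - x₀‖ := by
      have := hsmooth y x₀
      have h2 := norm_sub_norm_le (gradient f y) (gradient f x₀)
      linarith
    have h4 : ‖y - x₀‖ ≤ ‖y‖ + ‖x₀‖ := norm_sub_le _ _
    have h5 : ‖gradient f y‖ ≤ (‖gradient f x₀‖ + L * ‖x₀‖) + L * ‖y‖ := by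
      have := mul_le_mul_of_nonneg_left h4 hL.le
      linarith
    have h6 : ‖gradient f y‖^2 ≤ ((‖gradient f x₀‖ + L * ‖x₀‖) + L * ‖y‖)^2 :=
      pow_le_pow_left₀ (norm_nonneg _) h5 2
    rw [hA', hB']
    nlinarith [h6, sq_nonneg (‖gradient f x₀‖ + L * ‖x₀‖ - L * ‖y‖)]
  -- the one-step estimate
  have hOS := fun v => onestep f L hL hdiff hsmooth σ2 P G hGmeas hGint hGsqint
    hGunbiased hGvar γ hγ0 hγL v
  -- representation of the iterates
  have hxrep : ∀ k ω, x k ω = sgdIter x₀ γ G k (fun i => ξ i ω) := by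
    intro k
    induction k with
    | zero => intro ω; rw [hx0]; rfl
    | succ k ih =>
      intro ω
      rw [hxrec k ω, ih ω]
      rfl
  have hxmeas : ∀ k, Measurable (x k) := by
    intro k
    have h1 : Measurable fun (ω : Ω') (i : ℕ) => ξ i ω :=
      measurable_pi_lambda _ fun i => hξmeas i
    have h2 := (sgdIter_measurable x₀ γ G hGmeas k).comp h1
    have h3 : x k = fun ω => sgdIter x₀ γ G k (fun i => ξ i ω) := funext (hxrep k)
    rw [h3]; exact h2
  have hNE : Nonempty Ω := by
    by_contra h
    rw [not_nonempty_iff] at h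
    have h1 : (P Set.univ) = 1 := measure_univ
    rw [Set.univ_eq_empty_iff.2 h] at h1
    simp at h1
  -- independence of x k and ξ k
  have hindK : ∀ k, IndepFun (x k) (ξ k) Q := by
    intro k
    classical
    have h1 := hindep.indepFun_finset (Finset.range k) {k}
      (by simp) hξmeas
    set ext : (↥(Finset.range k) → Ω) → (ℕ → Ω) :=
      fun t i => if h : i ∈ Finset.range k then t ⟨i, h⟩ else Classical.arbitrary Ω with hext
    have hextm : Measurable ext := by
      rw [hext]
      apply measurable_pi_lambda
      intro i
      by_cases h : i ∈ Finset.range k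
      · have e : (fun t : ↥(Finset.range k) → Ω =>
            if hh : i ∈ Finset.range k then t ⟨i, hh⟩ else Classical.arbitrary Ω)
            = fun t => t ⟨i, h⟩ := funext fun t => dif_pos h
        rw [e]
        exact measurable_pi_apply _
      · have e : (fun t : ↥(Finset.range k) → Ω =>
            if hh : i ∈ Finset.range k then t ⟨i, hh⟩ else Classical.arbitrary Ω)
            = fun _ => Classical.arbitrary Ω := funext fun t => dif_neg h
        rw [e]
        exact measurable_const
    have hφm : Measurable fun t : (↥(Finset.range k) → Ω) =>
        sgdIter x₀ γ G k (ext t) :=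
      (sgdIter_measurable x₀ γ G hGmeas k).comp hextm
    have hψm : Measurable fun t : (↥({k} : Finset ℕ) → Ω) =>
        t ⟨k, Finset.mem_singleton_self k⟩ := measurable_pi_apply _
    have h2 := h1.comp hφm hψm
    have e1 : ((fun t : (↥(Finset.range k) → Ω) => sgdIter x₀ γ G k (ext t)) ∘
        (fun ω (i : (Finset.range k : Finset ℕ)) => ξ i ω)) = x k := by
      funext ω
      simp only [Function.comp_apply]
      rw [hxrep k ω]
      apply sgdIter_congr
      intro i hi
      rw [hext]
      exact dif_pos (Finset.mem_range.2 hi)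
    have e2 : ((fun t : (↥({k} : Finset ℕ) → Ω) => t ⟨k, Finset.mem_singleton_self k⟩) ∘
        (fun ω (i : ({k} : Finset ℕ)) => ξ i ω)) = ξ k := rfl
    rw [e1, e2] at h2
    exact h2
  have hmapk : ∀ k, Q.map (fun ω => (x k ω, ξ k ω)) = (Q.map (x k)).prod P := by
    intro k
    rw [← hdist k]
    exact (indepFun_iff_map_prod_eq_prod_map_map (hxmeas k).aemeasurable
      (hξmeas k).aemeasurable).1 (hindK k)
  have hprobk : ∀ k, IsProbabilityMeasure (Q.map (x k)) := fun k =>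
    Measure.isProbabilityMeasure_map (hxmeas k).aemeasurable
  -- the main per-step package
  have pack : ∀ k, Integrable (fun ω => ‖x k ω‖^2) Q →
      (Integrable (fun ω => ‖x (k+1) ω‖^2) Q ∧
       Integrable (fun ω => f (x k ω)) Q ∧
       Integrable (fun ω => ‖gradient f (x k ω)‖^2) Q ∧
       ∫ ω, f (x (k+1) ω) ∂Q ≤ ∫ ω, f (x k ω) ∂Q
         - γ/2 * ∫ ω, ‖gradient f (x k ω)‖^2 ∂Q + L * γ^2 / 2 * σ2) := by
    intro k hm
    haveI := hprobk k
    have hFk : Integrable (fun ω => f (x k ω)) Q := by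
      have hb : Integrable (fun ω => A + B * ‖x k ω‖^2) Q := by
        exact (integrable_const A).add (hm.const_mul B)
      refine hb.mono'
        ((hdiff.continuous.measurable.comp (hxmeas k)).aestronglyMeasurable)
        (Filter.Eventually.of_forall fun ω => ?_)
      simpa [Real.norm_eq_abs] using hgrow (x k ω)
    have hNk : Integrable (fun ω => ‖gradient f (x k ω)‖^2) Q := by
      have hb : Integrable (fun ω => A' + B' * ‖x k ω‖^2) Q := by
        exact (integrable_const A').add (hm.const_mul B')
      refine hb.mono'
        ((((hgc.measurable.comp (hxmeas k)).norm).pow_const 2).aestronglyMeasurable)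
        (Filter.Eventually.of_forall fun ω => ?_)
      rw [Real.norm_eq_abs, abs_of_nonneg (sq_nonneg _)]
      exact hgbd (x k ω)
    have hμmom : Integrable (fun v : EuclideanSpace ℝ (Fin d) => ‖v‖^2) (Q.map (x k)) := by
      refine (integrable_map_measure ?_ (hxmeas k).aemeasurable).2 hm
      exact (continuous_norm.pow 2).aestronglyMeasurable
    have hfμ : Integrable f (Q.map (x k)) :=
      (integrable_map_measure hdiff.continuous.aestronglyMeasurable
        (hxmeas k).aemeasurable).2 hFk
    have hNμ : Integrable (fun v => ‖gradient f v‖^2) (Q.map (x k)) :=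
      (integrable_map_measure ((hgc.norm.pow 2)).aestronglyMeasurable
        (hxmeas k).aemeasurable).2 hNk
    have hpairm : Measurable fun ω => (x k ω, ξ k ω) := (hxmeas k).prodMk (hξmeas k)
    have hHsm : AEStronglyMeasurable
        (fun q : EuclideanSpace ℝ (Fin d) × Ω => ‖G q.1 q.2‖^2)
        ((Q.map (x k)).prod P) := ((hGmeas.norm).pow_const 2).aestronglyMeasurable
    have hHint : Integrable (fun q : EuclideanSpace ℝ (Fin d) × Ω => ‖G q.1 q.2‖^2)
        ((Q.map (x k)).prod P) := by
      refine (integrable_prod_iff hHsm).2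
        ⟨Filter.Eventually.of_forall fun v => (hOS v).2.1, ?_⟩
      refine Integrable.mono' ((integrable_const (σ2 + A')).add (hμmom.const_mul B'))
        hHsm.norm.integral_prod_right' (Filter.Eventually.of_forall fun v => ?_)
      have e1 : (fun ω => ‖(‖G v ω‖^2 : ℝ)‖) = fun ω => ‖G v ω‖^2 := by
        funext ω; rw [Real.norm_eq_abs, abs_of_nonneg (sq_nonneg _)]
      simp only [Real.norm_eq_abs]
      have e2 : ∫ ω, |(‖G v ω‖^2 : ℝ)| ∂P = ∫ ω, ‖G v ω‖^2 ∂P := by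
        refine integral_congr_ae (Filter.Eventually.of_forall fun ω => ?_)
        exact abs_of_nonneg (sq_nonneg _)
      rw [e2, abs_of_nonneg (integral_nonneg fun ω => sq_nonneg _)]
      have h3 := (hOS v).2.2.1
      have h4 := hgbd v
      simp only [Pi.add_apply]
      linarith
    have hfstμ : Integrable (fun q : EuclideanSpace ℝ (Fin d) × Ω => ‖q.1‖^2)
        ((Q.map (x k)).prod P) := by
      have hsm : AEStronglyMeasurable
          (fun q : EuclideanSpace ℝ (Fin d) × Ω => ‖q.1‖^2) ((Q.map (x k)).prod P) :=
        (measurable_fst.norm.pow_const 2).aestronglyMeasurable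
      refine (integrable_prod_iff hsm).2
        ⟨Filter.Eventually.of_forall fun v => integrable_const (‖v‖^2), ?_⟩
      refine hμmom.congr (Filter.Eventually.of_forall fun v => ?_)
      simp [Real.norm_eq_abs, abs_pow, abs_norm, integral_const, measure_univ]
    have hdom : ∀ (c₁ c₂ c₃ : ℝ) (φ : EuclideanSpace ℝ (Fin d) × Ω → ℝ),
        AEStronglyMeasurable φ ((Q.map (x k)).prod P) →
        (∀ q, |φ q| ≤ c₁ + c₂ * ‖q.1‖^2 + c₃ * ‖G q.1 q.2‖^2) →
        Integrable φ ((Q.map (x k)).prod P) := by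
      intro c₁ c₂ c₃ φ hφm hφb
      have hb : Integrable (fun q : EuclideanSpace ℝ (Fin d) × Ω =>
          c₁ + c₂ * ‖q.1‖^2 + c₃ * ‖G q.1 q.2‖^2) ((Q.map (x k)).prod P) := by
        exact ((integrable_const c₁).add (hfstμ.const_mul c₂)).add (hHint.const_mul c₃)
      exact hb.mono' hφm (Filter.Eventually.of_forall fun q => by
        simpa [Real.norm_eq_abs] using hφb q)
    have hsubm : Measurable fun q : EuclideanSpace ℝ (Fin d) × Ω => q.1 - γ • G q.1 q.2 :=
      measurable_fst.sub (hGmeas.const_smul γ)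
    have hφ₁m : AEStronglyMeasurable
        (fun q : EuclideanSpace ℝ (Fin d) × Ω => f (q.1 - γ • G q.1 q.2))
        ((Q.map (x k)).prod P) :=
      (hdiff.continuous.measurable.comp hsubm).aestronglyMeasurable
    have hφ₂m : AEStronglyMeasurable
        (fun q : EuclideanSpace ℝ (Fin d) × Ω => ‖q.1 - γ • G q.1 q.2‖^2)
        ((Q.map (x k)).prod P) :=
      ((hsubm.norm).pow_const 2).aestronglyMeasurable
    have hφ₂b : ∀ q : EuclideanSpace ℝ (Fin d) × Ω,
        |‖q.1 - γ • G q.1 q.2‖^2| ≤ 0 + 2 * ‖q.1‖^2 + (2*γ^2) * ‖G q.1 q.2‖^2 := by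
      intro q
      rw [abs_of_nonneg (sq_nonneg _)]
      have h1 : ‖q.1 - γ • G q.1 q.2‖ ≤ ‖q.1‖ + γ * ‖G q.1 q.2‖ := by
        refine (norm_sub_le _ _).trans ?_
        rw [norm_smul, Real.norm_eq_abs, abs_of_nonneg hγ0]
      nlinarith [norm_nonneg (q.1 - γ • G q.1 q.2), norm_nonneg q.1,
        norm_nonneg (G q.1 q.2), sq_nonneg (‖q.1‖ - γ * ‖G q.1 q.2‖),
        mul_nonneg hγ0 (norm_nonneg (G q.1 q.2))]
    have hφ₂int : Integrable
        (fun q : EuclideanSpace ℝ (Fin d) × Ω => ‖q.1 - γ • G q.1 q.2‖^2)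
        ((Q.map (x k)).prod P) := hdom 0 2 (2*γ^2) _ hφ₂m hφ₂b
    have hφ₁b : ∀ q : EuclideanSpace ℝ (Fin d) × Ω,
        |f (q.1 - γ • G q.1 q.2)| ≤ A + (2*B) * ‖q.1‖^2 + (2*B*γ^2) * ‖G q.1 q.2‖^2 := by
      intro q
      have h0 := hgrow (q.1 - γ • G q.1 q.2)
      have h2 := hφ₂b q
      rw [abs_of_nonneg (sq_nonneg _)] at h2
      nlinarith [mul_le_mul_of_nonneg_left
        (by linarith : ‖q.1 - γ • G q.1 q.2‖^2 ≤ 2*‖q.1‖^2 + (2*γ^2)*‖G q.1 q.2‖^2) hB0]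
    have hφ₁int : Integrable
        (fun q : EuclideanSpace ℝ (Fin d) × Ω => f (q.1 - γ • G q.1 q.2))
        ((Q.map (x k)).prod P) := hdom A (2*B) (2*B*γ^2) _ hφ₁m hφ₁b
    have htrans : ∀ (φ : EuclideanSpace ℝ (Fin d) × Ω → ℝ),
        AEStronglyMeasurable φ ((Q.map (x k)).prod P) →
        ∫ ω, φ (x k ω, ξ k ω) ∂Q = ∫ q, φ q ∂((Q.map (x k)).prod P) := by
      intro φ hφ
      have h1 := integral_map (μ := Q) hpairm.aemeasurable
        (f := φ) (by rw [hmapk k]; exact hφ)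
      rw [hmapk k] at h1
      exact h1.symm
    have hmom1 : Integrable (fun ω => ‖x (k+1) ω‖^2) Q := by
      have h1 := (integrable_map_measure (f := fun ω => (x k ω, ξ k ω))
        (by rw [hmapk k]; exact hφ₂m) hpairm.aemeasurable).1
        (by rw [hmapk k]; exact hφ₂int)
      exact Integrable.congr h1 (Filter.Eventually.of_forall fun ω =>
        (congrArg (fun v => ‖v‖^2) (hxrec k ω)).symm)
    have hstep : ∫ ω, f (x (k+1) ω) ∂Q ≤ ∫ ω, f (x k ω) ∂Q
        - γ/2 * ∫ ω, ‖gradient f (x k ω)‖^2 ∂Q + L * γ^2 / 2 * σ2 := by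
      have e0 : ∫ ω, f (x (k+1) ω) ∂Q
          = ∫ ω, f (x k ω - γ • G (x k ω) (ξ k ω)) ∂Q :=
        integral_congr_ae (Filter.Eventually.of_forall fun ω => congrArg f (hxrec k ω))
      have e1 : ∫ ω, f (x k ω - γ • G (x k ω) (ξ k ω)) ∂Q
          = ∫ q, f (q.1 - γ • G q.1 q.2) ∂((Q.map (x k)).prod P) := htrans _ hφ₁m
      have e2 : ∫ q, f (q.1 - γ • G q.1 q.2) ∂((Q.map (x k)).prod P)
          = ∫ v, ∫ ω, f (v - γ • G v ω) ∂P ∂(Q.map (x k)) := integral_prod _ hφ₁int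
      have hInner : Integrable (fun v => ∫ ω, f (v - γ • G v ω) ∂P) (Q.map (x k)) :=
        hφ₁int.integral_prod_left
      have hOuter : Integrable
          (fun v => f v - γ/2 * ‖gradient f v‖^2 + L * γ^2 / 2 * σ2) (Q.map (x k)) := by
        exact (hfμ.sub (hNμ.const_mul (γ/2))).add (integrable_const _)
      have e3 : ∫ v, ∫ ω, f (v - γ • G v ω) ∂P ∂(Q.map (x k))
          ≤ ∫ v, (f v - γ/2 * ‖gradient f v‖^2 + L * γ^2 / 2 * σ2) ∂(Q.map (x k)) :=
        integral_mono hInner hOuter (fun v => (hOS v).2.2.2)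
      have e4 : ∫ v, (f v - γ/2 * ‖gradient f v‖^2 + L * γ^2 / 2 * σ2) ∂(Q.map (x k))
          = ∫ v, f v ∂(Q.map (x k)) - γ/2 * ∫ v, ‖gradient f v‖^2 ∂(Q.map (x k))
            + L * γ^2 / 2 * σ2 := by
        have i1 : Integrable (fun v : EuclideanSpace ℝ (Fin d) =>
            f v - γ/2 * ‖gradient f v‖^2) (Q.map (x k)) := by
          exact hfμ.sub (hNμ.const_mul (γ/2))
        rw [integral_add i1 (integrable_const _),
          integral_sub hfμ (hNμ.const_mul (γ/2)), integral_const_mul, integral_const,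
          probReal_univ]
        simp
      have e5 : ∫ v, f v ∂(Q.map (x k)) = ∫ ω, f (x k ω) ∂Q :=
        integral_map (hxmeas k).aemeasurable hdiff.continuous.aestronglyMeasurable
      have e6 : ∫ v, ‖gradient f v‖^2 ∂(Q.map (x k))
          = ∫ ω, ‖gradient f (x k ω)‖^2 ∂Q :=
        integral_map (hxmeas k).aemeasurable ((hgc.norm.pow 2)).aestronglyMeasurable
      rw [e0, e1, e2]
      rw [e5, e6] at e4
      linarith
    exact ⟨hmom1, hFk, hNk, hstep⟩
  -- second moments are finite for all k
  have hmom : ∀ k, Integrable (fun ω => ‖x k ω‖^2) Q := by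
    intro k
    induction k with
    | zero =>
      exact (integrable_const (‖x₀‖^2)).congr
        (Filter.Eventually.of_forall fun ω => (congrArg (fun v => ‖v‖^2) (hx0 ω)).symm)
    | succ k ih => exact (pack k ih).1
  -- telescoping
  have htel : ∀ K : ℕ, ∫ ω, f (x K ω) ∂Q
      + γ/2 * ∑ k ∈ Finset.range K, ∫ ω, ‖gradient f (x k ω)‖^2 ∂Q
      ≤ f x₀ + K * (L * γ^2 / 2 * σ2) := by
    intro K
    induction K with
    | zero =>
      simp only [Finset.range_zero, Finset.sum_empty, Nat.cast_zero, zero_mul, mul_zero,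
        add_zero]
      have : ∫ ω, f (x 0 ω) ∂Q = f x₀ := by
        rw [show (fun ω => f (x 0 ω)) = fun _ => f x₀ from funext fun ω => congrArg f (hx0 ω),
          integral_const, probReal_univ]
        simp
      rw [this]
    | succ K ih =>
      have hstep := (pack K (hmom K)).2.2.2
      rw [Finset.sum_range_succ, mul_add]
      have hc : ((K + 1 : ℕ) : ℝ) * (L * γ^2 / 2 * σ2)
          = (K : ℝ) * (L * γ^2 / 2 * σ2) + L * γ^2 / 2 * σ2 := by push_cast; ring
      rw [hc]
      linarith
  -- conclusion
  intro K hK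
  rcases Nat.eq_zero_or_pos K with h0 | hpos
  · subst h0
    simp only [Finset.range_zero, Finset.sum_empty, mul_zero]
    exact hε.le
  have hKpos : (0:ℝ) < K := by exact_mod_cast hpos
  have hFlb : fstar ≤ ∫ ω, f (x K ω) ∂Q := by
    have h1 := (pack K (hmom K)).2.1
    calc fstar = ∫ (_ : Ω'), fstar ∂Q := by rw [integral_const, probReal_univ]; simp
      _ ≤ _ := integral_mono (integrable_const _) h1 (fun ω => hlb _)
  set S := ∑ k ∈ Finset.range K, ∫ ω, ‖gradient f (x k ω)‖^2 ∂Q with hSdef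
  have h1 : γ/2 * S ≤ Δ + K * (L * γ^2 / 2 * σ2) := by
    have := htel K
    rw [hΔ]
    linarith
  have key1 : 4*Δ ≤ γ * ε * K := by
    have hg0 : (0:ℝ) < ε / (L * (ε + 2*σ2)) := by positivity
    have hK0nn : (0:ℝ) ≤ 4*Δ*L/ε + 8*Δ*L*σ2/ε^2 := by positivity
    have h2 : (ε / (L * (ε + 2*σ2))) * (4*Δ*L/ε + 8*Δ*L*σ2/ε^2) ≤ γ * K :=
      mul_le_mul hγlb hK hK0nn hγpos.le
    have h3 : ε * ((ε / (L * (ε + 2*σ2))) * (4*Δ*L/ε + 8*Δ*L*σ2/ε^2)) = 4*Δ := by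
      field_simp
      ring
    calc (4:ℝ)*Δ = ε * ((ε / (L * (ε + 2*σ2))) * (4*Δ*L/ε + 8*Δ*L*σ2/ε^2)) := h3.symm
      _ ≤ ε * (γ * K) := mul_le_mul_of_nonneg_left h2 hε.le
      _ = γ * ε * K := by ring
  have key2 : (γ * K) * (L * γ * σ2) ≤ (γ * K) * (ε/2) :=
    mul_le_mul_of_nonneg_left hγε (mul_nonneg hγ0 hKpos.le)
  have hγS : γ * S ≤ γ * (ε * K) := by nlinarith [h1, key1, key2]
  have hSle : S ≤ ε * K := le_of_mul_le_mul_left hγS hγpos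
  rw [one_div, inv_mul_le_iff₀ hKpos]
  linarith
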